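/- Let g : [0,L] → [0,∞) be continuous and decreasing, and suppose v₁, v₂ are C² solutions on [0,S] of −v'' = λg(v) with v₁(0) < v₂(0), v₁'(0) = v₂'(0) = 0. If v₁ ≤ v₂ on [0,s̄] and v₁(s̄) = v₂(s̄) for some s̄ ∈ (0,S], then v₁' ≡ v₂' on [0,s̄], which is impossible; hence v₁(s) < v₂(s) for all s ∈ [0,S]. -/

import Mathlib

theorem stmt15 (lam S : ℝ) (hlam : 0 < lam) (hS : 0 < S)
    (g : ℝ → ℝ) (hg : Continuous g) (hanti : Antitone g)
    (v₁ v₂ v₁' v₂' : ℝ → ℝ)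
    (hv₁ : ∀ s ∈ Set.Icc 0 S, HasDerivAt v₁ (v₁' s) s)
    (hv₁'' : ∀ s ∈ Set.Icc 0 S, HasDerivAt v₁' (-(lam * g (v₁ s))) s)
    (hv₂ : ∀ s ∈ Set.Icc 0 S, HasDerivAt v₂ (v₂' s) s)
    (hv₂'' : ∀ s ∈ Set.Icc 0 S, HasDerivAt v₂' (-(lam * g (v₂ s))) s)
    (h0 : v₁ 0 < v₂ 0) (h0' : v₁' 0 = 0) (h0'' : v₂' 0 = 0) :
    ∀ s ∈ Set.Icc 0 S, v₁ s < v₂ s := by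
  set w : ℝ → ℝ := fun s => v₂ s - v₁ s with hw_def
  set u : ℝ → ℝ := fun s => v₂' s - v₁' s with hu_def
  have hw : ∀ s ∈ Set.Icc 0 S, HasDerivAt w (u s) s :=
    fun s hs => (hv₂ s hs).sub (hv₁ s hs)
  have hw'' : ∀ s ∈ Set.Icc 0 S, HasDerivAt u (lam * (g (v₁ s) - g (v₂ s))) s := by
    intro s hs
    have := (hv₂'' s hs).sub (hv₁'' s hs)
    rw [show lam * (g (v₁ s) - g (v₂ s)) = -(lam * g (v₂ s)) - -(lam * g (v₁ s)) by ring]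
    exact this
  have hw0 : 0 < w 0 := sub_pos.mpr h0
  by_contra hcon
  push_neg at hcon
  obtain ⟨s₀, hs₀, hws₀⟩ := hcon
  set A : Set ℝ := Set.Icc 0 S ∩ w ⁻¹' Set.Iic 0 with hA
  have hAne : A.Nonempty := ⟨s₀, hs₀, by simpa [hw_def] using sub_nonpos.mpr hws₀⟩
  have hwcont : ContinuousOn w (Set.Icc 0 S) :=
    fun s hs => (hw s hs).continuousAt.continuousWithinAt
  have hAclosed : IsClosed A :=
    hwcont.preimage_isClosed_of_isClosed isClosed_Icc isClosed_Iic
  have hAbdd : BddBelow A := ⟨0, fun x hx => hx.1.1⟩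
  set sb := sInf A with hsb_def
  have hsbA : sb ∈ A := hAclosed.csInf_mem hAne hAbdd
  have hsbIcc : sb ∈ Set.Icc 0 S := hsbA.1
  have hsble : w sb ≤ 0 := hsbA.2
  have hsbpos : 0 < sb := by
    rcases lt_or_eq_of_le hsbIcc.1 with h | h
    · exact h
    · exfalso; rw [← h] at hsble; linarith
  have hpos : ∀ t ∈ Set.Ico (0:ℝ) sb, 0 < w t := by
    rintro t ⟨ht0, htsb⟩
    by_contra h
    push_neg at h
    have htA : t ∈ A := ⟨⟨ht0, htsb.le.trans hsbIcc.2⟩, h⟩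
    exact absurd (csInf_le hAbdd htA) (not_le.mpr htsb)
  have hsubset : Set.Icc (0:ℝ) sb ⊆ Set.Icc 0 S := Set.Icc_subset_Icc le_rfl hsbIcc.2
  have humono : MonotoneOn u (Set.Icc 0 sb) := by
    apply monotoneOn_of_deriv_nonneg (convex_Icc 0 sb)
    · exact fun t ht => (hw'' t (hsubset ht)).continuousAt.continuousWithinAt
    · intro t ht
      rw [interior_Icc] at ht
      exact (hw'' t (hsubset (Set.Ioo_subset_Icc_self ht))).differentiableAt.differentiableWithinAt
    · intro t ht
      rw [interior_Icc] at ht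
      rw [(hw'' t (hsubset (Set.Ioo_subset_Icc_self ht))).deriv]
      have hwt : 0 < w t := hpos t ⟨ht.1.le, ht.2⟩
      have hle : v₁ t ≤ v₂ t := by
        have := sub_pos.mp hwt
        linarith
      have hgle : g (v₂ t) ≤ g (v₁ t) := hanti hle
      nlinarith
  have h0mem : (0:ℝ) ∈ Set.Icc 0 sb := ⟨le_rfl, hsbpos.le⟩
  have hu0 : u 0 = 0 := by simp [hu_def, h0', h0'']
  have hunonneg : ∀ t ∈ Set.Icc (0:ℝ) sb, 0 ≤ u t := by
    intro t ht
    have := humono h0mem ht ht.1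
    rw [hu0] at this
    exact this
  have hwmono : MonotoneOn w (Set.Icc 0 sb) := by
    apply monotoneOn_of_deriv_nonneg (convex_Icc 0 sb)
    · exact fun t ht => (hw t (hsubset ht)).continuousAt.continuousWithinAt
    · intro t ht
      rw [interior_Icc] at ht
      exact (hw t (hsubset (Set.Ioo_subset_Icc_self ht))).differentiableAt.differentiableWithinAt
    · intro t ht
      rw [interior_Icc] at ht
      rw [(hw t (hsubset (Set.Ioo_subset_Icc_self ht))).deriv]
      exact hunonneg t (Set.Ioo_subset_Icc_self ht)
  have hfin : w 0 ≤ w sb := hwmono h0mem ⟨hsbpos.le, le_rfl⟩ hsbpos.le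
  linarith
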